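/- arXiv:1607.02833 — 3 statements merged into one kernel-verified Lean document; each statement's English description precedes it below -/
import Mathlib

section
/- Let x_0,…,x_k be unit vectors spanning a (k+1)-dimensional subspace V of ℝ^(n+1), and let x be a unit vector not antipodal to any x_i. If there exist weights λ ∈ ℝ^(k+1) with Σλ_i ≠ 0 such that Σ_i λ_i log_x(x_i) = 0, then x ∈ V. -/
open scoped RealInnerProductSpace

/-- The spherical Riemannian log `log_x(y) = (θ/sinθ)(y - cosθ • x)`,
`θ = arccos ⟪x,y⟫`. -/
noncomputable def sphLog {n : ℕ} (x y : EuclideanSpace ℝ (Fin (n + 1))) :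
    EuclideanSpace ℝ (Fin (n + 1)) :=
  (Real.arccos ⟪x, y⟫ / Real.sin (Real.arccos ⟪x, y⟫)) •
    (y - Real.cos (Real.arccos ⟪x, y⟫) • x)

/-- If a unit vector `p`, not antipodal to any reference point, admits barycentric
weights `λ` with `Σλ_i ≠ 0` and `Σλ_i log_p(x_i) = 0`, then `p` lies in the
`(k+1)`-dimensional linear span `V` of the reference unit vectors. -/
theorem stmt8 {n k : ℕ} (x : Fin (k + 1) → EuclideanSpace ℝ (Fin (n + 1)))
    (p : EuclideanSpace ℝ (Fin (n + 1)))
    (hunit : ∀ i, ‖x i‖ = 1) (hp : ‖p‖ = 1)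
    (hanti : ∀ i, p ≠ -x i)
    (V : Submodule ℝ (EuclideanSpace ℝ (Fin (n + 1))))
    (hV : V = Submodule.span ℝ (Set.range x))
    (hdim : Module.finrank ℝ V = k + 1)
    (l : Fin (k + 1) → ℝ) (hsum : (∑ i, l i) ≠ 0)
    (hbar : ∑ i, l i • sphLog p (x i) = 0) :
    p ∈ V := by
  subst hV
  by_cases hx : ∃ i, p = x i
  · obtain ⟨i, rfl⟩ := hx
    exact Submodule.subset_span ⟨i, rfl⟩
  push_neg at hx
  set t : Fin (k + 1) → ℝ := fun i => ⟪p, x i⟫ with ht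
  have habs : ∀ i, |t i| ≤ 1 := by
    intro i
    have := abs_real_inner_le_norm p (x i)
    rw [hp, hunit i] at this
    simpa [ht] using this
  have htlt : ∀ i, t i < 1 := by
    intro i
    rcases lt_or_eq_of_le (abs_le.mp (habs i)).2 with h1 | h1
    · exact h1
    · exact absurd ((inner_eq_one_iff_of_norm_eq_one hp (hunit i)).mp h1) (hx i)
  have htgt : ∀ i, -1 < t i := by
    intro i
    rcases lt_or_eq_of_le (abs_le.mp (habs i)).1 with h1 | h1
    · exact h1
    · exfalso
      have hn : ‖-x i‖ = 1 := by rw [norm_neg]; exact hunit i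
      have : ⟪p, -x i⟫ = 1 := by
        rw [inner_neg_right]; show -(t i) = 1; rw [← h1]; ring
      exact hanti i ((inner_eq_one_iff_of_norm_eq_one hp hn).mp this)
  set f : Fin (k + 1) → ℝ := fun i =>
    Real.arccos (t i) / Real.sin (Real.arccos (t i)) with hf
  have hfpos : ∀ i, 0 < f i := by
    intro i
    apply div_pos (Real.arccos_pos.mpr (htlt i))
    rw [Real.sin_arccos]
    have h2 : t i ^ 2 < 1 := by
      rw [sq_lt_one_iff_abs_lt_one]
      exact abs_lt.mpr ⟨htgt i, htlt i⟩
    exact Real.sqrt_pos.mpr (by linarith)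
  have hlog : ∀ i, sphLog p (x i) = f i • x i - (f i * t i) • p := by
    intro i
    rw [sphLog, Real.cos_arccos (le_of_lt (htgt i)) (le_of_lt (htlt i))]
    rw [smul_sub, smul_smul]
  rw [Finset.sum_congr rfl (fun i _ => by rw [hlog i])] at hbar
  simp only [smul_sub, smul_smul] at hbar
  rw [Finset.sum_sub_distrib, sub_eq_zero, ← Finset.sum_smul] at hbar
  set c : ℝ := ∑ i, l i * (f i * t i) with hc
  have hli : LinearIndependent ℝ x := by
    rw [linearIndependent_iff_card_eq_finrank_span]
    simpa [Set.finrank] using hdim.symm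
  by_cases hc0 : c = 0
  · exfalso
    rw [hc0, zero_smul] at hbar
    have := (Fintype.linearIndependent_iff.mp hli) (fun i => l i * f i) hbar
    apply hsum
    refine Finset.sum_eq_zero fun i _ => ?_
    have := this i
    rcases mul_eq_zero.mp this with h | h
    · exact h
    · exact absurd h (ne_of_gt (hfpos i))
  · have : p = c⁻¹ • ∑ i, (l i * f i) • x i := by
      rw [hbar, smul_smul, inv_mul_cancel₀ hc0, one_smul]
    rw [this]
    exact Submodule.smul_mem _ _ (Submodule.sum_mem _ fun i _ =>
      Submodule.smul_mem _ _ (Submodule.subset_span ⟨i, rfl⟩))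
end

section
/- The matrix H = 2uu^T + 2θcot(θ)(Id − xx^T − uu^T), with x a unit vector, u a unit vector orthogonal to x, and θ ∈ (0,π), restricted to the tangent space {v : ⟨v,x⟩=0}, is positive definite if θ < π/2, positive semidefinite with kernel of dimension n−1 if θ = π/2, and indefinite (has a negative eigenvalue) if θ > π/2 and n ≥ 2. -/
open scoped RealInnerProductSpace

/-- The Hessian `H = 2uuᵀ + 2θcotθ(Id - xxᵀ - uuᵀ)` of the spherical squared
distance at distance `θ`, restricted to the tangent space `{v : ⟪x,v⟫ = 0}`, is
positive definite for `θ < π/2`, positive semidefinite with kernel of dimension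
`n-1` for `θ = π/2`, and indefinite for `θ > π/2` (and `n ≥ 2`). -/
theorem stmt12 {n : ℕ} (hn : 2 ≤ n)
    (x u : EuclideanSpace ℝ (Fin (n + 1)))
    (hx : ‖x‖ = 1) (hu : ‖u‖ = 1) (hxu : ⟪x, u⟫ = 0)
    (θ : ℝ) (hθ0 : 0 < θ) (hθπ : θ < Real.pi)
    (H : EuclideanSpace ℝ (Fin (n + 1)) → EuclideanSpace ℝ (Fin (n + 1)))
    (hH : ∀ v, H v = (2 * ⟪u, v⟫) • u +
        (2 * θ * (Real.cos θ / Real.sin θ)) • (v - ⟪x, v⟫ • x - ⟪u, v⟫ • u)) :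
    (θ < Real.pi / 2 →
        ∀ v : EuclideanSpace ℝ (Fin (n + 1)), ⟪x, v⟫ = 0 → v ≠ 0 → 0 < ⟪v, H v⟫) ∧
    (θ = Real.pi / 2 →
        (∀ v : EuclideanSpace ℝ (Fin (n + 1)), ⟪x, v⟫ = 0 → 0 ≤ ⟪v, H v⟫) ∧
        ∃ K : Submodule ℝ (EuclideanSpace ℝ (Fin (n + 1))),
          (∀ v, v ∈ K ↔ ⟪x, v⟫ = 0 ∧ H v = 0) ∧ Module.finrank ℝ K = n - 1) ∧
    (Real.pi / 2 < θ →
        ∃ v : EuclideanSpace ℝ (Fin (n + 1)), ⟪x, v⟫ = 0 ∧ ⟪v, H v⟫ < 0) := by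
  have hsin : 0 < Real.sin θ := Real.sin_pos_of_pos_of_lt_pi hθ0 hθπ
  set c : ℝ := 2 * θ * (Real.cos θ / Real.sin θ) with hc
  have key : ∀ v : EuclideanSpace ℝ (Fin (n + 1)), ⟪x, v⟫ = 0 →
      ⟪v, H v⟫ = 2 * ⟪u, v⟫ ^ 2 + c * (‖v‖ ^ 2 - ⟪u, v⟫ ^ 2) := by
    intro v hv
    rw [hH v]
    rw [inner_add_right, real_inner_smul_right, real_inner_smul_right,
      inner_sub_right, inner_sub_right, real_inner_smul_right, real_inner_smul_right,
      hv, real_inner_self_eq_norm_sq, real_inner_comm v u]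
    ring
  have bessel : ∀ v : EuclideanSpace ℝ (Fin (n + 1)), ⟪u, v⟫ ^ 2 ≤ ‖v‖ ^ 2 := by
    intro v
    have h := abs_real_inner_le_norm u v
    rw [hu, one_mul] at h
    calc ⟪u, v⟫ ^ 2 = |⟪u, v⟫| ^ 2 := (sq_abs _).symm
      _ ≤ ‖v‖ ^ 2 := pow_le_pow_left₀ (abs_nonneg _) h 2
  -- span of {x, u} has dimension 2, its orthogonal complement n - 1
  have hux : ⟪u, x⟫ = 0 := by rw [real_inner_comm]; exact hxu
  have hxx : ⟪x, x⟫ = (1 : ℝ) := by rw [real_inner_self_eq_norm_sq, hx]; norm_num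
  have huu : ⟪u, u⟫ = (1 : ℝ) := by rw [real_inner_self_eq_norm_sq, hu]; norm_num
  set K : Submodule ℝ (EuclideanSpace ℝ (Fin (n + 1))) := (Submodule.span ℝ {x, u})ᗮ with hK
  have memK : ∀ v, v ∈ K ↔ ⟪x, v⟫ = 0 ∧ ⟪u, v⟫ = 0 := by
    intro v
    constructor
    · intro hv
      exact ⟨hv x (Submodule.subset_span (by simp)),
        hv u (Submodule.subset_span (by simp))⟩
    · rintro ⟨h1, h2⟩ w hw
      obtain ⟨a, b, rfl⟩ := Submodule.mem_span_pair.mp hw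
      rw [inner_add_left, real_inner_smul_left, real_inner_smul_left, h1, h2]
      ring
  have hrankK : Module.finrank ℝ K = n - 1 := by
    have hli : LinearIndependent ℝ ![x, u] := by
      rw [LinearIndependent.pair_iff]
      intro s t hst
      have h1 : ⟪x, s • x + t • u⟫ = (0 : ℝ) := by rw [hst, inner_zero_right]
      have h2 : ⟪u, s • x + t • u⟫ = (0 : ℝ) := by rw [hst, inner_zero_right]
      rw [inner_add_right, real_inner_smul_right, real_inner_smul_right, hxx, hxu] at h1
      rw [inner_add_right, real_inner_smul_right, real_inner_smul_right, hux, huu] at h2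
      constructor <;> linarith
    have hspan : Module.finrank ℝ (Submodule.span ℝ ({x, u} : Set _)) = 2 := by
      have hr : Set.range ![x, u] = {x, u} := by
        simp [Matrix.range_cons, Matrix.range_empty, Set.pair_comm]
      rw [← hr, finrank_span_eq_card hli]
      simp
    have := Submodule.finrank_add_finrank_orthogonal (Submodule.span ℝ ({x, u} : Set _))
    rw [hspan, finrank_euclideanSpace_fin] at this
    rw [hK]
    omega
  refine ⟨?_, ?_, ?_⟩
  · -- θ < π/2
    intro hθ v hv hv0
    have hcos : 0 < Real.cos θ := Real.cos_pos_of_mem_Ioo ⟨by linarith [Real.pi_pos], hθ⟩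
    have hcpos : 0 < c := mul_pos (by linarith) (div_pos hcos hsin)
    rw [key v hv]
    rcases eq_or_ne (⟪u, v⟫ : ℝ) 0 with h | h
    · have : 0 < ‖v‖ ^ 2 := pow_pos (norm_pos_iff.mpr hv0) 2
      rw [h]; nlinarith
    · have h2 : 0 < (⟪u, v⟫ : ℝ) ^ 2 := by positivity
      nlinarith [bessel v]
  · -- θ = π/2
    intro hθ
    have hcos : Real.cos θ = 0 := by rw [hθ, Real.cos_pi_div_two]
    have hc0 : c = 0 := by rw [hc, hcos]; ring
    constructor
    · intro v hv
      rw [key v hv, hc0]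
      nlinarith [sq_nonneg (⟪u, v⟫ : ℝ)]
    · refine ⟨K, fun v => ?_, hrankK⟩
      rw [memK v]
      constructor
      · rintro ⟨h1, h2⟩
        refine ⟨h1, ?_⟩
        rw [hH v, h2, hc0]
        simp
      · rintro ⟨h1, h2⟩
        refine ⟨h1, ?_⟩
        have h3 : ⟪u, H v⟫ = (0 : ℝ) := by rw [h2, inner_zero_right]
        rw [hH v, inner_add_right, real_inner_smul_right, real_inner_smul_right,
          inner_sub_right, inner_sub_right, real_inner_smul_right, real_inner_smul_right,
          huu, hux] at h3
        rw [hc0] at h3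
        linarith [h3]
  · -- θ > π/2
    intro hθ
    have hcos : Real.cos θ < 0 :=
      Real.cos_neg_of_pi_div_two_lt_of_lt hθ (by linarith [Real.pi_pos])
    have hcneg : c < 0 := by
      rw [hc]
      have : Real.cos θ / Real.sin θ < 0 := div_neg_of_neg_of_pos hcos hsin
      nlinarith
    have hKne : K ≠ ⊥ := by
      intro h
      rw [h, finrank_bot] at hrankK
      omega
    obtain ⟨v, hvK, hv0⟩ := Submodule.exists_mem_ne_zero_of_ne_bot hKne
    obtain ⟨h1, h2⟩ := (memK v).mp hvK
    refine ⟨v, h1, ?_⟩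
    rw [key v h1, h2]
    have : 0 < ‖v‖ ^ 2 := pow_pos (norm_pos_iff.mpr hv0) 2
    nlinarith
end

section
/- Let ŷ_1,…,ŷ_N ∈ ℝ^n, ȳ their mean, Σ their empirical covariance matrix with spectral decomposition Σ = Σ_j σ_j² u_j u_j^T, eigenvalues sorted decreasingly with σ_1² > … > σ_{k+1}². Among all flags of affine subspaces V_0 ⊂ V_1 ⊂ … ⊂ V_k with dim V_i = i, the Accumulated Unexplained Variance AUV = Σ_{i=0}^k Σ_{j=1}^N dist(ŷ_j, V_i)² is minimized by the flag V_i = ȳ + Span(u_1,…,u_i), i.e., the flag generated by the first k principal components through the mean. -/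
open scoped RealInnerProductSpace

section Aux

variable {E : Type*} [NormedAddCommGroup E] [InnerProductSpace ℝ E]

lemma my_le_infDist {s : Set E} (hs : s.Nonempty) {x : E} {b : ℝ}
    (h : ∀ z ∈ s, b ≤ dist x z) : b ≤ Metric.infDist x s := by
  haveI := hs.to_subtype
  rw [Metric.infDist_eq_iInf]
  exact le_ciInf fun z => h z z.2

/-- Norm of the residual after projecting onto an orthonormal family. -/
lemma aux_norm {ι : Type*} {e : ι → E} (he : Orthonormal ℝ e) (s : Finset ι) (x : E) :
    ‖x - ∑ m ∈ s, ⟪e m, x⟫ • e m‖ ^ 2 = ‖x‖ ^ 2 - ∑ m ∈ s, ⟪e m, x⟫ ^ 2 := by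
  have h1 : ⟪x, ∑ m ∈ s, ⟪e m, x⟫ • e m⟫ = ∑ m ∈ s, ⟪e m, x⟫ ^ 2 := by
    rw [inner_sum]
    refine Finset.sum_congr rfl fun m _ => ?_
    rw [real_inner_smul_right, real_inner_comm]; ring
  have h2 : ‖∑ m ∈ s, ⟪e m, x⟫ • e m‖ ^ 2 = ∑ m ∈ s, ⟪e m, x⟫ ^ 2 := by
    rw [← real_inner_self_eq_norm_sq, he.inner_sum]
    refine Finset.sum_congr rfl fun m _ => ?_
    simp [sq]
  rw [norm_sub_sq_real, h1, h2]; ring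

/-- Residual is orthogonal to each member of the family. -/
lemma aux_orth {ι : Type*} {e : ι → E} (he : Orthonormal ℝ e) (s : Finset ι) (x : E)
    {m : ι} (hm : m ∈ s) : ⟪x - ∑ m' ∈ s, ⟪e m', x⟫ • e m', e m⟫ = 0 := by
  rw [inner_sub_left, he.inner_left_sum (fun m' => ⟪e m', x⟫) hm]
  simp [real_inner_comm]

end Aux

/-- Ky Fan-type bound. -/
lemma kyfan {n d : ℕ} (hd : d < n) (σ2 : Fin n → ℝ)
    (hsort : ∀ i j : Fin n, i < j → σ2 j ≤ σ2 i)
    (c : Fin n → ℝ) (hc0 : ∀ i, 0 ≤ c i) (hc1 : ∀ i, c i ≤ 1)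
    (hsum : ∑ i, c i = d) :
    ∑ i, σ2 i * c i ≤ ∑ i ∈ Finset.univ.filter (fun l : Fin n => (l : ℕ) < d), σ2 i := by
  classical
  set A := Finset.univ.filter (fun l : Fin n => (l : ℕ) < d) with hA
  set t := σ2 ⟨d, hd⟩ with ht
  have hcard : (A.card : ℝ) = d := by
    have : A = Finset.map (Fin.castLEEmb hd.le) Finset.univ := by
      ext i
      simp only [hA, Finset.mem_filter, Finset.mem_univ, true_and, Finset.mem_map,
        Fin.castLEEmb_apply]
      constructor
      · intro h; exact ⟨⟨(i : ℕ), h⟩, by ext; simp⟩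
      · rintro ⟨m, rfl⟩; exact m.2
    rw [this]; simp
  have key : ∑ i, (σ2 i - t) * c i ≤ ∑ i ∈ A, (σ2 i - t) := by
    rw [← Finset.sum_filter_add_sum_filter_not Finset.univ (fun l : Fin n => (l : ℕ) < d)
      (fun i => (σ2 i - t) * c i), ← hA]
    have h1 : ∑ i ∈ A, (σ2 i - t) * c i ≤ ∑ i ∈ A, (σ2 i - t) := by
      refine Finset.sum_le_sum fun i hi => ?_
      have hid : (i : ℕ) < d := by simpa [hA] using hi
      have : t ≤ σ2 i := hsort i ⟨d, hd⟩ (by simpa [Fin.lt_def] using hid)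
      exact mul_le_of_le_one_right (by linarith) (hc1 i)
    have h2 : ∑ i ∈ Finset.univ.filter (fun l : Fin n => ¬ (l : ℕ) < d),
        (σ2 i - t) * c i ≤ 0 := by
      refine Finset.sum_nonpos fun i hi => ?_
      have hid : ¬ (i : ℕ) < d := by simpa using (Finset.mem_filter.mp hi).2
      have hle : σ2 i ≤ t := by
        rcases eq_or_lt_of_le (not_lt.mp hid) with h | h
        · have : i = ⟨d, hd⟩ := by ext; exact h.symm
          rw [this]
        · exact hsort ⟨d, hd⟩ i (by simpa [Fin.lt_def] using h)
      exact mul_nonpos_of_nonpos_of_nonneg (by linarith) (hc0 i)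
    linarith
  have expand : ∑ i, σ2 i * c i = ∑ i, (σ2 i - t) * c i + t * d := by
    rw [← hsum, Finset.mul_sum, ← Finset.sum_add_distrib]
    exact Finset.sum_congr rfl fun i _ => by ring
  have expand2 : ∑ i ∈ A, (σ2 i - t) + t * d = ∑ i ∈ A, σ2 i := by
    rw [Finset.sum_sub_distrib, Finset.sum_const, nsmul_eq_mul, ← hcard]
    ring
  linarith

/-- Euclidean PCA optimizes the Accumulated Unexplained Variance (AUV) criterion:
among all flags of nonempty nested affine subspaces `W_0 ⊂ … ⊂ W_k` of `ℝ^n` with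
`dim W_i = i`, the flag `V_i = ȳ + Span(u_1,…,u_i)` through the mean spanned by the
first principal components minimizes `AUV = Σ_{i=0}^k Σ_j dist(ŷ_j, ·_i)²`, assuming
the first `k+1` eigenvalues of the empirical covariance are simple (strictly sorted). -/
theorem stmt15 {n k N : ℕ} (hk : k + 1 ≤ n) (hN : 0 < N)
    (y : Fin N → EuclideanSpace ℝ (Fin n))
    (ybar : EuclideanSpace ℝ (Fin n)) (hybar : ybar = (N : ℝ)⁻¹ • ∑ j, y j)
    (u : Fin n → EuclideanSpace ℝ (Fin n)) (σ : Fin n → ℝ)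
    (horth : Orthonormal ℝ u)
    (hspec : ∀ z, (N : ℝ)⁻¹ • ∑ j, ⟪y j - ybar, z⟫ • (y j - ybar)
        = ∑ i, (σ i ^ 2 * ⟪u i, z⟫) • u i)
    (hsorted : ∀ i j : Fin n, i < j → σ j ^ 2 ≤ σ i ^ 2)
    (hstrict : ∀ i j : Fin n, i < j → (j : ℕ) ≤ k → σ j ^ 2 < σ i ^ 2)
    (V : Fin (k + 1) → AffineSubspace ℝ (EuclideanSpace ℝ (Fin n)))
    (hV : ∀ i, V i = AffineSubspace.mk' ybar
        (Submodule.span ℝ {e | ∃ j : Fin n, (j : ℕ) < (i : ℕ) ∧ e = u j}))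
    (W : Fin (k + 1) → AffineSubspace ℝ (EuclideanSpace ℝ (Fin n)))
    (hWne : ∀ i, (W i : Set (EuclideanSpace ℝ (Fin n))).Nonempty)
    (hWnested : ∀ i j, i ≤ j → W i ≤ W j)
    (hWdim : ∀ i, Module.finrank ℝ (W i).direction = (i : ℕ)) :
    ∑ i, ∑ j, Metric.infDist (y j) (V i : Set (EuclideanSpace ℝ (Fin n))) ^ 2
      ≤ ∑ i, ∑ j, Metric.infDist (y j) (W i : Set (EuclideanSpace ℝ (Fin n))) ^ 2 := by
  classical
  have hNR : (N : ℝ) ≠ 0 := Nat.cast_ne_zero.mpr hN.ne'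
  set v : Fin N → EuclideanSpace ℝ (Fin n) := fun j => y j - ybar with hv
  have hvj : ∀ j, y j - ybar = v j := fun _ => rfl
  simp only [hvj] at hspec
  -- mean-centered data sums to zero
  have hsum0 : ∑ j, v j = 0 := by
    simp only [hv, Finset.sum_sub_distrib, Finset.sum_const, Finset.card_univ,
      Fintype.card_fin, hybar]
    rw [← Nat.cast_smul_eq_nsmul ℝ, smul_smul, mul_inv_cancel₀ hNR, one_smul, sub_self]
  -- scalar form of the spectral hypothesis
  have hq : ∀ z, ∑ j, ⟪v j, z⟫ ^ 2 = (N : ℝ) * ∑ i, σ i ^ 2 * ⟪u i, z⟫ ^ 2 := by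
    intro z
    have h0 : (N : ℝ)⁻¹ * ∑ j, ⟪v j, z⟫ * ⟪v j, z⟫
        = ∑ i, (σ i ^ 2 * ⟪u i, z⟫) * ⟪u i, z⟫ := by
      have h := congrArg (fun w => ⟪w, z⟫) (hspec z)
      simpa only [real_inner_smul_left, sum_inner] using h
    have h2 : ∑ i, (σ i ^ 2 * ⟪u i, z⟫) * ⟪u i, z⟫ = ∑ i, σ i ^ 2 * ⟪u i, z⟫ ^ 2 :=
      Finset.sum_congr rfl fun i _ => by ring
    have h3 : ∑ j, ⟪v j, z⟫ ^ 2 = ∑ j, ⟪v j, z⟫ * ⟪v j, z⟫ :=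
      Finset.sum_congr rfl fun j _ => by ring
    rw [h3, ← h2, ← h0, ← mul_assoc, mul_inv_cancel₀ hNR, one_mul]
  -- u is an orthonormal basis; Parseval
  have hcard : Fintype.card (Fin n) = Module.finrank ℝ (EuclideanSpace ℝ (Fin n)) := by
    simp [finrank_euclideanSpace]
  have hB : ∃ B : OrthonormalBasis (Fin n) ℝ (EuclideanSpace ℝ (Fin n)), ∀ i, B i = u i := by
    rcases Nat.eq_zero_or_pos n with hn0 | hn
    · exact ⟨(stdOrthonormalBasis ℝ _).reindex (finCongr (by simp [hn0])),
        fun i => absurd i.2 (by omega)⟩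
    haveI : Nonempty (Fin n) := ⟨⟨0, hn⟩⟩
    have hspan : ⊤ ≤ Submodule.span ℝ (Set.range u) := by
      rw [← coe_basisOfLinearIndependentOfCardEqFinrank horth.linearIndependent hcard]
      exact (basisOfLinearIndependentOfCardEqFinrank horth.linearIndependent hcard).span_eq.ge
    exact ⟨OrthonormalBasis.mk horth hspan, fun i => by simp [OrthonormalBasis.coe_mk]⟩
  obtain ⟨B, hBu⟩ := hB
  have hpar : ∀ x : EuclideanSpace ℝ (Fin n), ∑ i, ⟪u i, x⟫ ^ 2 = ‖x‖ ^ 2 := by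
    intro x
    have := B.sum_inner_mul_inner x x
    rw [← real_inner_self_eq_norm_sq, ← this]
    refine Finset.sum_congr rfl fun i _ => ?_
    rw [hBu, real_inner_comm]; ring
  refine Finset.sum_le_sum fun p _ => ?_
  set d := (p : ℕ) with hd
  have hdn : d < n := lt_of_lt_of_le p.2 hk
  set A := Finset.univ.filter (fun l : Fin n => (l : ℕ) < d) with hA
  -- data variance captured by u l is N * σ l ^ 2
  have hdata : ∀ l : Fin n, ∑ j, ⟪u l, v j⟫ ^ 2 = (N : ℝ) * σ l ^ 2 := by
    intro l
    have := hq (u l)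
    have h2 : ∑ i, σ i ^ 2 * ⟪u i, u l⟫ ^ 2 = σ l ^ 2 := by
      rw [Finset.sum_eq_single l]
      · simp [orthonormal_iff_ite.mp horth, horth.1 l]
      · intro i _ hil
        have : ⟪u i, u l⟫ = 0 := by
          have := orthonormal_iff_ite.mp horth i l
          simpa [hil] using this
        simp [this]
      · simp
    rw [← h2, ← this]
    exact Finset.sum_congr rfl fun j _ => by rw [real_inner_comm]
  -- the middle quantity
  set M : ℝ := ∑ j, ‖v j‖ ^ 2 - (N : ℝ) * ∑ l ∈ A, σ l ^ 2 with hM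
  have hVle : ∑ j, Metric.infDist (y j) (V p : Set (EuclideanSpace ℝ (Fin n))) ^ 2 ≤ M := by
    have hper : ∀ j, Metric.infDist (y j) (V p : Set (EuclideanSpace ℝ (Fin n))) ^ 2
        ≤ ‖v j‖ ^ 2 - ∑ l ∈ A, ⟪u l, v j⟫ ^ 2 := by
      intro j
      set q : EuclideanSpace ℝ (Fin n) := ybar + ∑ l ∈ A, ⟪u l, v j⟫ • u l with hqdef
      have hqmem : q ∈ (V p : Set (EuclideanSpace ℝ (Fin n))) := by
        rw [hV p]
        show q ∈ AffineSubspace.mk' ybar _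
        rw [AffineSubspace.mem_mk']
        have : q -ᵥ ybar = ∑ l ∈ A, ⟪u l, v j⟫ • u l := by
          simp [hqdef, vsub_eq_sub]
        rw [this]
        refine Submodule.sum_mem _ fun l hl => Submodule.smul_mem _ _ ?_
        exact Submodule.subset_span ⟨l, by simpa [hA] using hl, rfl⟩
      have h1 : Metric.infDist (y j) (V p : Set (EuclideanSpace ℝ (Fin n))) ≤ dist (y j) q :=
        Metric.infDist_le_dist_of_mem hqmem
      have h2 : dist (y j) q ^ 2 = ‖v j‖ ^ 2 - ∑ l ∈ A, ⟪u l, v j⟫ ^ 2 := by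
        rw [dist_eq_norm]
        have : y j - q = v j - ∑ l ∈ A, ⟪u l, v j⟫ • u l := by
          simp only [hqdef, hv]; abel
        rw [this, aux_norm horth]
      calc Metric.infDist (y j) (V p : Set (EuclideanSpace ℝ (Fin n))) ^ 2
          ≤ dist (y j) q ^ 2 := by
            exact pow_le_pow_left₀ Metric.infDist_nonneg h1 2
        _ = _ := h2
    calc ∑ j, Metric.infDist (y j) (V p : Set (EuclideanSpace ℝ (Fin n))) ^ 2
        ≤ ∑ j, (‖v j‖ ^ 2 - ∑ l ∈ A, ⟪u l, v j⟫ ^ 2) := Finset.sum_le_sum fun j _ => hper j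
      _ = ∑ j, ‖v j‖ ^ 2 - ∑ l ∈ A, ∑ j, ⟪u l, v j⟫ ^ 2 := by
          rw [Finset.sum_sub_distrib, Finset.sum_comm]
      _ = M := by
          rw [hM, Finset.mul_sum]
          congr 1
          exact Finset.sum_congr rfl fun l _ => hdata l
  have hWle : M ≤ ∑ j, Metric.infDist (y j) (W p : Set (EuclideanSpace ℝ (Fin n))) ^ 2 := by
    obtain ⟨w, hw⟩ := hWne p
    set S := (W p).direction with hS
    have hfr : Module.finrank ℝ S = d := hWdim p
    set b : OrthonormalBasis (Fin d) ℝ S := (stdOrthonormalBasis ℝ S).reindex (finCongr hfr)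
      with hb
    set e : Fin d → EuclideanSpace ℝ (Fin n) := fun m => (b m : EuclideanSpace ℝ (Fin n))
      with he'
    have he : Orthonormal ℝ e := by
      constructor
      · intro m; exact b.orthonormal.1 m
      · intro m m' hmm'
        have := b.orthonormal.2 hmm'
        simpa [he', Submodule.coe_inner] using this
    -- residual map
    set F : EuclideanSpace ℝ (Fin n) → EuclideanSpace ℝ (Fin n) :=
      fun x => x - ∑ m, ⟪e m, x⟫ • e m with hF
    have hForth : ∀ x, ∀ s ∈ S, ⟪F x, s⟫ = 0 := by
      intro x s hs
      have hrep : s = ∑ m, b.repr ⟨s, hs⟩ m • e m := by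
        have := b.sum_repr ⟨s, hs⟩
        have := congrArg (Submodule.subtype S) this
        simpa [he', Submodule.coe_sum] using this.symm
      rw [hrep, inner_sum]
      refine Finset.sum_eq_zero fun m _ => ?_
      rw [real_inner_smul_right, aux_orth he Finset.univ x (Finset.mem_univ m), mul_zero]
    have hFmem : ∀ x, x - F x ∈ S := by
      intro x
      have : x - F x = ∑ m, ⟪e m, x⟫ • e m := by simp [hF]
      rw [this]
      exact Submodule.sum_mem _ fun m _ => Submodule.smul_mem _ _ (b m).2
    -- pointwise lower bound
    have hlow : ∀ j, ‖F (y j - w)‖ ^ 2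
        ≤ Metric.infDist (y j) (W p : Set (EuclideanSpace ℝ (Fin n))) ^ 2 := by
      intro j
      have hle : ‖F (y j - w)‖ ≤ Metric.infDist (y j) (W p : Set (EuclideanSpace ℝ (Fin n))) := by
        refine my_le_infDist (hWne p) fun z hz => ?_
        set x := y j - w with hx
        have hzw : z - w ∈ S := by
          rw [hS]
          exact AffineSubspace.vsub_mem_direction hz hw
        have hsplit : y j - z = F x + ((x - F x) - (z - w)) := by
          simp only [hx]; abel
        have hSo : ⟪F x, (x - F x) - (z - w)⟫ = 0 :=
          hForth x _ (Submodule.sub_mem _ (hFmem x) hzw)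
        have : dist (y j) z ^ 2 = ‖F x‖ ^ 2 + ‖(x - F x) - (z - w)‖ ^ 2 := by
          rw [dist_eq_norm, hsplit, norm_add_sq_real, hSo]; ring
        have h2 : ‖F x‖ ^ 2 ≤ dist (y j) z ^ 2 := by
          rw [this]
          have := sq_nonneg ‖(x - F x) - (z - w)‖
          linarith
        calc ‖F x‖ = Real.sqrt (‖F x‖ ^ 2) := (Real.sqrt_sq (norm_nonneg _)).symm
          _ ≤ Real.sqrt (dist (y j) z ^ 2) := Real.sqrt_le_sqrt h2
          _ = dist (y j) z := Real.sqrt_sq dist_nonneg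
      exact pow_le_pow_left₀ (norm_nonneg _) hle 2
    -- mean shift: sum over data of ‖F (y j - w)‖² ≥ sum ‖F (v j)‖²
    have hFadd : ∀ a c : EuclideanSpace ℝ (Fin n), F (a + c) = F a + F c := by
      intro a c
      simp only [hF, inner_add_right, add_smul, Finset.sum_add_distrib]
      abel
    have hFsum0 : ∑ j, F (v j) = 0 := by
      have h1 : ∑ j, F (v j) = (∑ j, v j) - ∑ m, (∑ j, ⟪e m, v j⟫) • e m := by
        simp only [hF, Finset.sum_sub_distrib]
        congr 1
        rw [Finset.sum_comm]
        exact Finset.sum_congr rfl fun m _ => by rw [Finset.sum_smul]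
      rw [h1, hsum0]
      have hz : ∀ m, (∑ j, ⟪e m, v j⟫) = 0 := by
        intro m
        rw [← inner_sum, hsum0, inner_zero_right]
      rw [zero_sub, neg_eq_zero]
      exact Finset.sum_eq_zero fun m _ => by rw [hz m, zero_smul]
    have hshift : ∑ j, ‖F (v j)‖ ^ 2 ≤ ∑ j, ‖F (y j - w)‖ ^ 2 := by
      have hrw : ∀ j, y j - w = v j + (ybar - w) := by intro j; simp [hv]
      have : ∑ j, ‖F (y j - w)‖ ^ 2
          = ∑ j, ‖F (v j)‖ ^ 2 + 2 * ⟪∑ j, F (v j), F (ybar - w)⟫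
            + (N : ℝ) * ‖F (ybar - w)‖ ^ 2 := by
        calc ∑ j, ‖F (y j - w)‖ ^ 2
            = ∑ j, (‖F (v j)‖ ^ 2 + 2 * ⟪F (v j), F (ybar - w)⟫ + ‖F (ybar - w)‖ ^ 2) := by
              refine Finset.sum_congr rfl fun j _ => ?_
              rw [hrw j, hFadd, norm_add_sq_real]
          _ = _ := by
              rw [Finset.sum_add_distrib, Finset.sum_add_distrib, Finset.sum_const,
                Finset.card_univ, Fintype.card_fin, ← Finset.mul_sum, ← sum_inner]
              push_cast
              ring
      rw [this, hFsum0]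
      simp only [inner_zero_left, mul_zero, add_zero]
      have : 0 ≤ (N : ℝ) * ‖F (ybar - w)‖ ^ 2 := by positivity
      linarith
    -- compute Σ ‖F (v j)‖²
    have hcompute : ∑ j, ‖F (v j)‖ ^ 2
        = ∑ j, ‖v j‖ ^ 2 - (N : ℝ) * ∑ l, σ l ^ 2 * (∑ m, ⟪u l, e m⟫ ^ 2) := by
      have h1 : ∀ j, ‖F (v j)‖ ^ 2 = ‖v j‖ ^ 2 - ∑ m, ⟪e m, v j⟫ ^ 2 := fun j =>
        aux_norm he Finset.univ (v j)
      simp only [h1]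
      rw [Finset.sum_sub_distrib]
      congr 1
      rw [Finset.sum_comm]
      have h2 : ∀ m, ∑ j, ⟪e m, v j⟫ ^ 2 = (N : ℝ) * ∑ l, σ l ^ 2 * ⟪u l, e m⟫ ^ 2 := by
        intro m
        rw [← hq (e m)]
        exact Finset.sum_congr rfl fun j _ => by rw [real_inner_comm]
      simp only [h2]
      rw [← Finset.mul_sum, Finset.sum_comm]
      congr 1
      exact Finset.sum_congr rfl fun l _ => by rw [Finset.mul_sum]
    -- Ky Fan bound
    have hKF : ∑ l, σ l ^ 2 * (∑ m, ⟪u l, e m⟫ ^ 2) ≤ ∑ l ∈ A, σ l ^ 2 := by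
      refine kyfan hdn (fun l => σ l ^ 2) hsorted (fun l => ∑ m, ⟪u l, e m⟫ ^ 2)
        (fun l => Finset.sum_nonneg fun m _ => sq_nonneg _) (fun l => ?_) ?_
      · have := he.sum_inner_products_le (u l) (s := Finset.univ)
        have hul : ‖u l‖ = 1 := horth.1 l
        calc ∑ m, ⟪u l, e m⟫ ^ 2 = ∑ m, ‖⟪e m, u l⟫‖ ^ 2 := by
              refine Finset.sum_congr rfl fun m _ => ?_
              rw [real_inner_comm, Real.norm_eq_abs, sq_abs]
          _ ≤ ‖u l‖ ^ 2 := this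
          _ = 1 := by rw [hul]; norm_num
      · rw [Finset.sum_comm]
        have hone : ∀ m, ∑ l, ⟪u l, e m⟫ ^ 2 = 1 := by
          intro m
          rw [hpar (e m)]
          have : ‖e m‖ = 1 := he.1 m
          rw [this]; norm_num
        calc ∑ m : Fin d, ∑ l, ⟪u l, e m⟫ ^ 2 = ∑ _m : Fin d, (1 : ℝ) :=
              Finset.sum_congr rfl fun m _ => hone m
          _ = d := by simp
    have : (N : ℝ) * ∑ l, σ l ^ 2 * (∑ m, ⟪u l, e m⟫ ^ 2) ≤ (N : ℝ) * ∑ l ∈ A, σ l ^ 2 :=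
      mul_le_mul_of_nonneg_left hKF (Nat.cast_nonneg N)
    have hfinal : M ≤ ∑ j, ‖F (v j)‖ ^ 2 := by
      rw [hcompute, hM]; linarith
    calc M ≤ ∑ j, ‖F (v j)‖ ^ 2 := hfinal
      _ ≤ ∑ j, ‖F (y j - w)‖ ^ 2 := hshift
      _ ≤ ∑ j, Metric.infDist (y j) (W p : Set (EuclideanSpace ℝ (Fin n))) ^ 2 :=
          Finset.sum_le_sum fun j _ => hlow j
  linarith
end
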